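/- Let R be the quotient ring ℤ[λ₁,λ₂,δ₁,ξ]/(2ξ, ξ(ξ+λ₁)). Then the top Chern class element δ₁ (an indeterminate) is not a zero divisor in R; more generally, the image of δ₁ in R is a non-zero-divisor. -/

import Mathlib

set_option maxRecDepth 4000

open MvPolynomial

private lemma nzd_of_equiv {A B : Type*} [CommRing A] [CommRing B] (f : A ≃+* B) (a : A)
    (h : f a ∈ nonZeroDivisors B) : a ∈ nonZeroDivisors A := by
  rw [mem_nonZeroDivisors_iff_right] at h ⊢
  intro x hx
  have h2 : f x * f a = 0 := by rw [← map_mul, hx, map_zero]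
  have h3 := h (f x) h2
  have h4 := congrArg f.symm h3
  simpa using h4

/-- λ₁ = X 0, λ₂ = X 1, δ₁ = X 2, ξ = X 3.  In
`R = ℤ[λ₁,λ₂,δ₁,ξ]/(2ξ, ξ(ξ+λ₁))` the image of `δ₁` is a non-zero-divisor. -/
theorem stmt1 :
    Ideal.Quotient.mk
        (Ideal.span ({2 * X 3, X 3 * (X 3 + X 0)} : Set (MvPolynomial (Fin 4) ℤ)))
        (X 2) ∈
      nonZeroDivisors
        (MvPolynomial (Fin 4) ℤ ⧸
          Ideal.span ({2 * X 3, X 3 * (X 3 + X 0)} : Set (MvPolynomial (Fin 4) ℤ))) := by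
  set I : Ideal (MvPolynomial (Fin 4) ℤ) :=
    Ideal.span ({2 * X 3, X 3 * (X 3 + X 0)} : Set (MvPolynomial (Fin 4) ℤ)) with hI
  set J : Ideal (MvPolynomial (Fin 3) ℤ) :=
    Ideal.span ({2 * X 2, X 2 * (X 2 + X 1)} : Set (MvPolynomial (Fin 3) ℤ)) with hJ
  let e : MvPolynomial (Fin 4) ℤ ≃+* Polynomial (MvPolynomial (Fin 3) ℤ) :=
    ((renameEquiv ℤ (Equiv.swap (0 : Fin 4) 2)).trans (finSuccEquiv ℤ 3)).toRingEquiv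
  have he0 : e (X 0) = Polynomial.C (X 1) := by
    show finSuccEquiv ℤ 3 (rename (Equiv.swap (0 : Fin 4) 2) (X 0)) = _
    rw [rename_X]
    have : Equiv.swap (0 : Fin 4) 2 0 = Fin.succ 1 := by decide
    rw [this, finSuccEquiv_X_succ]
  have he2 : e (X 2) = Polynomial.X := by
    show finSuccEquiv ℤ 3 (rename (Equiv.swap (0 : Fin 4) 2) (X 2)) = _
    rw [rename_X]
    have : Equiv.swap (0 : Fin 4) 2 2 = 0 := by decide
    rw [this, finSuccEquiv_X_zero]
  have he3 : e (X 3) = Polynomial.C (X 2) := by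
    show finSuccEquiv ℤ 3 (rename (Equiv.swap (0 : Fin 4) 2) (X 3)) = _
    rw [rename_X]
    have : Equiv.swap (0 : Fin 4) 2 3 = Fin.succ 2 := by decide
    rw [this, finSuccEquiv_X_succ]
  have hmap : J.map Polynomial.C = I.map (e : MvPolynomial (Fin 4) ℤ →+* _) := by
    rw [hI, hJ, Ideal.map_span, Ideal.map_span, Set.image_insert_eq, Set.image_insert_eq,
      Set.image_singleton, Set.image_singleton]
    congr 1
    have h1 : (e : MvPolynomial (Fin 4) ℤ →+* _) (2 * X 3)
        = Polynomial.C (2 * X 2 : MvPolynomial (Fin 3) ℤ) := by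
      show e (2 * X 3) = _
      rw [map_mul, map_mul, he3, map_ofNat, map_ofNat]
    have h2 : (e : MvPolynomial (Fin 4) ℤ →+* _) (X 3 * (X 3 + X 0))
        = Polynomial.C (X 2 * (X 2 + X 1) : MvPolynomial (Fin 3) ℤ) := by
      show e (X 3 * (X 3 + X 0)) = _
      rw [map_mul, map_add, he3, he0, map_mul, map_add]
    rw [h1, h2]
  let qe := Ideal.quotientEquiv I (J.map Polynomial.C) e hmap
  let F := qe.trans (Ideal.polynomialQuotientEquivQuotientPolynomial J).symm
  apply nzd_of_equiv (B := Polynomial (MvPolynomial (Fin 3) ℤ ⧸ J)) F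
  have hF : F (Ideal.Quotient.mk I (X 2)) = Polynomial.X := by
    show (Ideal.polynomialQuotientEquivQuotientPolynomial J).symm
      (qe (Ideal.Quotient.mk I (X 2))) = _
    rw [Ideal.quotientEquiv_mk, he2,
      Ideal.polynomialQuotientEquivQuotientPolynomial_symm_mk, Polynomial.map_X]
  rw [hF]
  exact Polynomial.monic_X.mem_nonZeroDivisors
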